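/- For all real numbers α, p, q with 0 < α < 1, 0 < p < 1, 0 < q < 1 and real c with 1 < c < 2, there exists N₀ such that for every N ≥ N₀ there exists an N-dimensional Boolean network (not required to be cooperative) that is p-c-chaotic and exhibits p-α-q-decoherence. -/

import Mathlib

/-- The state space of an `N`-dimensional Boolean network. -/
abbrev BState (N : ℕ) := Fin N → Bool

/-- The attractor (eventual periodic orbit) reached from initial condition `s`:
the set of states visited infinitely often by the trajectory `t ↦ f^[t] s`. -/
def attractor {N : ℕ} (f : BState N → BState N) (s : BState N) : Set (BState N) :=
  {x | ∀ T : ℕ, ∃ t ≥ T, f^[t] s = x}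

/-- The network `f` is `p`-`c`-chaotic: more than `p·2^N` initial conditions
reach an attractor of length `> c^N`. -/
def pcChaotic {N : ℕ} (f : BState N → BState N) (p c : ℝ) : Prop :=
  p * 2 ^ N < (({s : BState N | (c : ℝ) ^ N < ((attractor f s).ncard : ℝ)}).ncard : ℝ)

/-- Ordered pairs of states at Hamming distance exactly 1. -/
def PerturbPairs (N : ℕ) : Set (BState N × BState N) :=
  {q | hammingDist q.1 q.2 = 1}

/-- `p`-coalescence: more than `p·N·2^N` perturbation pairs have trajectories that
coincide at some positive time. -/
def pCoalescent {N : ℕ} (f : BState N → BState N) (p : ℝ) : Prop :=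
  p * ((N : ℝ) * 2 ^ N) <
    (({q ∈ PerturbPairs N | ∃ t > 0, f^[t] q.1 = f^[t] q.2}).ncard : ℝ)

/-- `p`-instability: at least `p·N·2^N` perturbation pairs reach different attractors. -/
def pUnstable {N : ℕ} (f : BState N → BState N) (p : ℝ) : Prop :=
  p * ((N : ℝ) * 2 ^ N) ≤
    (({q ∈ PerturbPairs N | attractor f q.1 ≠ attractor f q.2}).ncard : ℝ)

/-- Coordinate `j` is an input of coordinate `i` of `f` (equivalently, `i` is an
output of `j`): the `i`-th coordinate of `f` depends on the `j`-th coordinate. -/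
def isInput {N : ℕ} (f : BState N → BState N) (j i : Fin N) : Prop :=
  ∃ s s' : BState N, (∀ k, k ≠ j → s k = s' k) ∧ f s i ≠ f s' i

/-- Every coordinate has at most 2 inputs and at most 2 outputs. -/
def biQuadratic {N : ℕ} (f : BState N → BState N) : Prop :=
  ∀ i : Fin N, ({j | isInput f j i}.ncard ≤ 2) ∧ ({j | isInput f i j}.ncard ≤ 2)

/-- Bi-quadratic and every coordinate has exactly 2 inputs. -/
def strictlyBiQuadratic {N : ℕ} (f : BState N → BState N) : Prop :=
  biQuadratic f ∧ ∀ i : Fin N, {j | isInput f j i}.ncard = 2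

/-- `p`-`α`-decoherence: at least `p·N·2^N` perturbation pairs have Hamming distance
`≥ α·N` at infinitely many times `t > 0`. -/
def pAlphaDecoherent {N : ℕ} (f : BState N → BState N) (p α : ℝ) : Prop :=
  p * ((N : ℝ) * 2 ^ N) ≤
    (({q ∈ PerturbPairs N |
        ∀ T : ℕ, ∃ t > T,
          α * N ≤ (hammingDist (f^[t] q.1) (f^[t] q.2) : ℝ)}).ncard : ℝ)

/-- `p`-`α`-`q`-decoherence: at least `p·N·2^N` perturbation pairs are such that, for
all sufficiently large `t*`, the Hamming distance is `≥ α·N` on at least a proportion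
`q` of the times `t ∈ {0, …, t*}`. -/
def pAlphaQDecoherent {N : ℕ} (f : BState N → BState N) (p α q : ℝ) : Prop :=
  p * ((N : ℝ) * 2 ^ N) ≤
    (({r ∈ PerturbPairs N |
        ∃ T₀ : ℕ, ∀ tstar : ℕ, T₀ ≤ tstar →
          q * ((tstar : ℝ) + 1) ≤
            (({t : ℕ | t ≤ tstar ∧
                α * N ≤ (hammingDist (f^[t] r.1) (f^[t] r.2) : ℝ)}).ncard : ℝ)}).ncard : ℝ)
namespace P35

lemma bool4 {x y z w : Bool} (h : (x != y) = (z != w)) : (x != z) = (y != w) := by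
  cases x <;> cases y <;> cases z <;> cases w <;> simp_all

lemma bool4' (x y z w : Bool) : ((x != y) != (z != w)) = ((x != z) != (y != w)) := by
  cases x <;> cases y <;> cases z <;> cases w <;> rfl

/-- Gray code. -/
def g (i : ℕ) : ℕ := i ^^^ (i / 2)

lemma g_lt {n i : ℕ} (h : i < 2 ^ n) : g i < 2 ^ n :=
  Nat.xor_lt_two_pow h (lt_of_le_of_lt (Nat.div_le_self _ _) h)

lemma g_inj {a b : ℕ} (h : g a = g b) : a = b := by
  have hb : ∀ j, (a ^^^ b).testBit j = (a ^^^ b).testBit (j + 1) := by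
    intro j
    have h1 := congrArg (fun x => x.testBit j) h
    simp only [g, Nat.testBit_xor, Nat.testBit_div_two] at h1 ⊢
    exact bool4 h1
  have hstep : ∀ j m, (a ^^^ b).testBit j = (a ^^^ b).testBit (j + m) := by
    intro j m
    induction m with
    | zero => rfl
    | succ m ih => rw [ih, ← Nat.add_assoc]; exact hb (j + m)
  have hall : ∀ j, (a ^^^ b).testBit j = false := by
    intro j
    rw [hstep j (a ^^^ b)]
    exact Nat.testBit_lt_two_pow
      (lt_of_lt_of_le (Nat.lt_two_pow_self (n := a ^^^ b)) (Nat.pow_le_pow_right (by norm_num) (by omega)))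
  have hz : a ^^^ b = 0 := Nat.eq_of_testBit_eq fun j => by simp [hall j]
  exact xor_eq_zero_iff.mp hz

lemma xor_div_two (a b : ℕ) : (a ^^^ b) / 2 = a / 2 ^^^ b / 2 := by
  apply Nat.eq_of_testBit_eq
  intro j
  simp [Nat.testBit_div_two, Nat.testBit_xor]

lemma xor_xor (a b c d : ℕ) : (a ^^^ b) ^^^ (c ^^^ d) = (a ^^^ c) ^^^ (b ^^^ d) := by
  apply Nat.eq_of_testBit_eq
  intro j
  simp only [Nat.testBit_xor]
  exact bool4' _ _ _ _

lemma xor_succ (i : ℕ) : ∃ k, i ^^^ (i + 1) = 2 ^ (k + 1) - 1 := by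
  induction i using Nat.strong_induction_on with
  | _ i ih =>
    rcases Nat.even_or_odd i with ⟨m, hm⟩ | ⟨m, hm⟩
    · refine ⟨0, ?_⟩
      subst hm
      apply Nat.eq_of_testBit_eq
      intro j
      cases j with
      | zero =>
        have e1 : (m + m) % 2 = 0 := by omega
        have e2 : (m + m + 1) % 2 = 1 := by omega
        simp only [Nat.testBit_xor]
        simp only [Nat.testBit_zero, e1, e2]
        decide
      | succ j =>
        have e1 : (m + m) / 2 = m := by omega
        have e2 : (m + m + 1) / 2 = m := by omega
        simp only [Nat.testBit_xor]
        simp only [Nat.testBit_succ, e1, e2]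
        simp [Nat.testBit_lt_two_pow (show (1:ℕ) < 2 ^ (j+1) from Nat.one_lt_two_pow (by omega))]
    · obtain ⟨k, hk⟩ := ih m (by omega)
      refine ⟨k + 1, ?_⟩
      have key : i ^^^ (i + 1) = 2 * (m ^^^ (m + 1)) + 1 := by
        subst hm
        apply Nat.eq_of_testBit_eq
        intro j
        cases j with
        | zero =>
          have e1 : (2 * m + 1) % 2 = 1 := by omega
          have e2 : (2 * m + 1 + 1) % 2 = 0 := by omega
          have e3 : (2 * (m ^^^ (m + 1)) + 1) % 2 = 1 := by omega
          simp only [Nat.testBit_xor]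
          simp only [Nat.testBit_zero, e1, e2, e3]
          decide
        | succ j =>
          have e1 : (2 * m + 1) / 2 = m := by omega
          have e2 : (2 * m + 1 + 1) / 2 = m + 1 := by omega
          have e3 : (2 * (m ^^^ (m + 1)) + 1) / 2 = m ^^^ (m + 1) := by omega
          simp only [Nat.testBit_xor]
          simp only [Nat.testBit_succ, e1, e2, e3]
          simp [Nat.testBit_xor]
      rw [key, hk]
      have h1 : 1 ≤ 2 ^ (k + 1) := Nat.one_le_two_pow
      rw [pow_succ 2 (k + 1)]
      omega

lemma two_pow_sub_one_xor (k : ℕ) : (2 ^ (k + 1) - 1) ^^^ (2 ^ k - 1) = 2 ^ k := by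
  apply Nat.eq_of_testBit_eq
  intro j
  simp only [Nat.testBit_xor, Nat.testBit_two_pow_sub_one, Nat.testBit_two_pow]
  by_cases h1 : j < k + 1 <;> by_cases h2 : j < k <;> by_cases h3 : k = j <;>
    simp [h1, h2, h3] <;> omega


lemma g_adj {n : ℕ} (hn : 1 ≤ n) (i : ℕ) :
    ∃ k < n, g (i % 2 ^ n) ^^^ g ((i + 1) % 2 ^ n) = 2 ^ k := by
  have h2 : 0 < 2 ^ n := Nat.pow_pos (by norm_num)
  set a := i % 2 ^ n with ha
  have halt : a < 2 ^ n := Nat.mod_lt _ h2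
  have hsucc : (i + 1) % 2 ^ n = (a + 1) % 2 ^ n :=
    ((Nat.mod_modEq i _).add_right 1).symm
  by_cases hc : a + 1 < 2 ^ n
  · rw [hsucc, Nat.mod_eq_of_lt hc]
    obtain ⟨k, hk⟩ := xor_succ a
    have hgg : g a ^^^ g (a + 1) = (a ^^^ (a + 1)) ^^^ ((a ^^^ (a + 1)) / 2) := by
      rw [xor_div_two]
      exact xor_xor a (a / 2) (a + 1) ((a + 1) / 2)
    refine ⟨k, ?_, ?_⟩
    · have hx : 2 ^ (k + 1) - 1 < 2 ^ n := hk ▸ Nat.xor_lt_two_pow halt hc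
      have hle : 2 ^ k < 2 ^ (k + 1) := by
        have : 1 ≤ 2 ^ k := Nat.one_le_two_pow
        rw [pow_succ]; omega
      have : (2:ℕ) ^ k < 2 ^ n := by omega
      exact (Nat.pow_lt_pow_iff_right (by norm_num)).mp this
    · rw [hgg, hk]
      have hdiv : (2 ^ (k + 1) - 1) / 2 = 2 ^ k - 1 := by
        have : (2:ℕ) ^ (k + 1) = 2 * 2 ^ k := by rw [pow_succ]; ring
        omega
      rw [hdiv, two_pow_sub_one_xor]
  · have ha1 : a + 1 = 2 ^ n := by omega
    have h0 : (a + 1) % 2 ^ n = 0 := by rw [ha1, Nat.mod_self]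
    rw [hsucc, h0]
    refine ⟨n - 1, by omega, ?_⟩
    have hg0 : g 0 = 0 := rfl
    have haa : a = 2 ^ n - 1 := by omega
    rw [hg0, Nat.xor_zero, haa]
    show (2 ^ n - 1) ^^^ (2 ^ n - 1) / 2 = 2 ^ (n - 1)
    have hpow : (2:ℕ) ^ n = 2 * 2 ^ (n - 1) := by
      rw [← pow_succ']
      congr 1
      omega
    have hdiv : (2 ^ n - 1) / 2 = 2 ^ (n - 1) - 1 := by omega
    rw [hdiv]
    have h := two_pow_sub_one_xor (n - 1)
    rwa [show n - 1 + 1 = n by omega] at h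

/-- The master cycle. -/
def cyc (N n : ℕ) (u : ℕ) : BState N := fun j =>
  xor (decide (u % 2 = 1)) (if (j : ℕ) < n then (g (u / 2 % 2 ^ n)).testBit j else false)

lemma mod2_mod (n u : ℕ) : u % 2 ^ (n + 1) % 2 = u % 2 :=
  Nat.mod_mod_of_dvd u (dvd_pow_self 2 (Nat.succ_ne_zero n))

lemma div2_mod (n u : ℕ) : u % 2 ^ (n + 1) / 2 % 2 ^ n = u / 2 % 2 ^ n := by
  have e : (2:ℕ) ^ (n + 1) = 2 * 2 ^ n := by rw [pow_succ]; ring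
  rw [← Nat.mod_mul_right_div_self, ← Nat.mod_mul_right_div_self, ← e,
    Nat.mod_mod_of_dvd _ dvd_rfl]

lemma cyc_mod (N n u : ℕ) : cyc N n u = cyc N n (u % 2 ^ (n + 1)) := by
  funext j
  simp only [cyc, mod2_mod, div2_mod]

lemma cyc_congr {N n u v : ℕ} (h : u % 2 ^ (n + 1) = v % 2 ^ (n + 1)) :
    cyc N n u = cyc N n v := by
  rw [cyc_mod N n u, h, ← cyc_mod]

lemma cyc_inj {N n : ℕ} (hnN : n < N) {u v : ℕ}
    (hu : u < 2 ^ (n + 1)) (hv : v < 2 ^ (n + 1)) (h : cyc N n u = cyc N n v) : u = v := by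
  have h2 : 0 < 2 ^ n := Nat.pow_pos (by norm_num)
  have hpow : (2:ℕ) ^ (n + 1) = 2 * 2 ^ n := by rw [pow_succ]; ring
  have hpar : u % 2 = v % 2 := by
    have hh := congrFun h ⟨n, hnN⟩
    simp only [cyc] at hh
    rw [if_neg (by simp)] at hh
    rcases Nat.eq_zero_or_pos (u % 2) with h1 | h1 <;>
      rcases Nat.eq_zero_or_pos (v % 2) with h2 | h2 <;>
        simp [show ¬ (u % 2 = 1) ∨ (u % 2 = 1) from by omega] at hh ⊢ <;> omega
  have hbits : g (u / 2 % 2 ^ n) = g (v / 2 % 2 ^ n) := by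
    apply Nat.eq_of_testBit_eq
    intro j
    by_cases hj : j < n
    · have hh := congrFun h ⟨j, hj.trans hnN⟩
      simp only [cyc] at hh
      rw [if_pos (by simpa using hj), if_pos (by simpa using hj)] at hh
      rw [hpar] at hh
      cases hdec : decide (v % 2 = 1) <;> rw [hdec] at hh <;> simpa using hh
    · rw [Nat.testBit_lt_two_pow, Nat.testBit_lt_two_pow] <;>
        exact lt_of_lt_of_le (g_lt (Nat.mod_lt _ h2))
          (Nat.pow_le_pow_right (by norm_num) (by omega))
  have heq := g_inj hbits
  have hu2 : u / 2 < 2 ^ n := by omega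
  have hv2 : v / 2 < 2 ^ n := by omega
  rw [Nat.mod_eq_of_lt hu2, Nat.mod_eq_of_lt hv2] at heq
  omega

lemma cyc_adj {N n : ℕ} (hn : 1 ≤ n) (hnN : n < N) (v : ℕ) :
    N - 1 ≤ hammingDist (cyc N n v) (cyc N n (v + 1)) := by
  classical
  have hsplit := Finset.card_filter_add_card_filter_not
    (s := (Finset.univ : Finset (Fin N))) (p := fun j => cyc N n v j ≠ cyc N n (v + 1) j)
  simp only [not_not] at hsplit
  have hcardN : (Finset.univ : Finset (Fin N)).card = N := by simp
  rw [hcardN] at hsplit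
  have hle1 : (Finset.univ.filter fun j : Fin N =>
      cyc N n v j = cyc N n (v + 1) j).card ≤ 1 := by
    rcases Nat.even_or_odd v with ⟨m, hm⟩ | ⟨m, hm⟩
    · have e1 : decide (v % 2 = 1) = false := by
        apply decide_eq_false; omega
      have e2 : decide ((v + 1) % 2 = 1) = true := by
        apply decide_eq_true; omega
      have e3 : (v + 1) / 2 = v / 2 := by omega
      have : (Finset.univ.filter fun j : Fin N =>
          cyc N n v j = cyc N n (v + 1) j).card = 0 := by
        rw [Finset.card_eq_zero, Finset.filter_eq_empty_iff]
        intro j _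
        simp only [cyc, e1, e2, e3]
        cases hb : (if (j:ℕ) < n then (g (v / 2 % 2 ^ n)).testBit j else false) <;> simp [hb]
      omega
    · obtain ⟨k, hkn, hk⟩ := g_adj hn (v / 2)
      have e1 : decide (v % 2 = 1) = true := by apply decide_eq_true; omega
      have e2 : decide ((v + 1) % 2 = 1) = false := by apply decide_eq_false; omega
      have e3 : (v + 1) / 2 = v / 2 + 1 := by omega
      have hsub : (Finset.univ.filter fun j : Fin N =>
          cyc N n v j = cyc N n (v + 1) j) ⊆ {(⟨k, hkn.trans hnN⟩ : Fin N)} := by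
        intro j hj
        rw [Finset.mem_filter] at hj
        obtain ⟨-, hj⟩ := hj
        simp only [cyc, e1, e2, e3] at hj
        by_cases hjn : (j:ℕ) < n
        · rw [if_pos hjn, if_pos hjn] at hj
          have hne : (g (v / 2 % 2 ^ n)).testBit j ≠ (g ((v / 2 + 1) % 2 ^ n)).testBit j := by
            cases hb : (g (v / 2 % 2 ^ n)).testBit j <;> rw [hb] at hj <;> simp at hj <;>
              simp [hj]
          have : ((g (v / 2 % 2 ^ n)) ^^^ (g ((v / 2 + 1) % 2 ^ n))).testBit j = true := by
            rw [Nat.testBit_xor]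
            cases hb : (g (v / 2 % 2 ^ n)).testBit j <;>
              cases hb2 : (g ((v / 2 + 1) % 2 ^ n)).testBit j <;> simp_all
          rw [hk, Nat.testBit_two_pow] at this
          have : k = (j : ℕ) := by simpa using this
          simp [Finset.mem_singleton, Fin.ext_iff, this]
        · rw [if_neg hjn, if_neg hjn] at hj
          simp at hj
      calc (Finset.univ.filter fun j : Fin N =>
          cyc N n v j = cyc N n (v + 1) j).card
          ≤ ({(⟨k, hkn.trans hnN⟩ : Fin N)} : Finset (Fin N)).card := Finset.card_le_card hsub
        _ = 1 := Finset.card_singleton _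
  have : hammingDist (cyc N n v) (cyc N n (v + 1)) =
      (Finset.univ.filter fun j : Fin N => cyc N n v j ≠ cyc N n (v + 1) j).card := rfl
  omega


/-- Hamming weight. -/
def wt {N : ℕ} (s : BState N) : ℕ := (Finset.univ.filter fun j => s j = true).card

/-- The network. -/
noncomputable def net (N n : ℕ) : BState N → BState N := fun s =>
  if h : ∃ u, u < 2 ^ (n + 1) ∧ cyc N n u = s then cyc N n (h.choose + 1)
  else cyc N n (wt s)

lemma Lpos (n : ℕ) : 0 < 2 ^ (n + 1) := Nat.pow_pos (by norm_num)

lemma net_cyc {N n : ℕ} (hnN : n < N) (u : ℕ) :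
    net N n (cyc N n u) = cyc N n (u + 1) := by
  have hex : ∃ w, w < 2 ^ (n + 1) ∧ cyc N n w = cyc N n u :=
    ⟨u % 2 ^ (n + 1), Nat.mod_lt _ (Lpos n), (cyc_mod N n u).symm⟩
  rw [net, dif_pos hex]
  obtain ⟨hw1, hw2⟩ := hex.choose_spec
  have hch : hex.choose = u % 2 ^ (n + 1) :=
    cyc_inj hnN hw1 (Nat.mod_lt _ (Lpos n)) (hw2.trans (cyc_mod N n u))
  rw [hch]
  exact cyc_congr ((Nat.mod_modEq u _).add_right 1)

lemma net_iter {N n : ℕ} (hnN : n < N) (u t : ℕ) :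
    (net N n)^[t] (cyc N n u) = cyc N n (u + t) := by
  induction t with
  | zero => rfl
  | succ t ih =>
    rw [Function.iterate_succ_apply', ih, net_cyc hnN, Nat.add_assoc]

lemma net_off {N n : ℕ} (hnN : n < N) {s : BState N}
    (h : ¬ ∃ u, u < 2 ^ (n + 1) ∧ cyc N n u = s) (t : ℕ) :
    (net N n)^[t + 1] s = cyc N n (wt s + t) := by
  rw [Function.iterate_succ_apply, show net N n s = cyc N n (wt s) from dif_neg h,
    net_iter hnN]

lemma traj {N n : ℕ} (hnN : n < N) (s : BState N) :
    ∃ u₀, ∀ t, (net N n)^[t + 1] s = cyc N n (u₀ + t) := by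
  by_cases h : ∃ u, u < 2 ^ (n + 1) ∧ cyc N n u = s
  · obtain ⟨u, -, rfl⟩ := h
    exact ⟨u + 1, fun t => by rw [net_iter hnN]; exact cyc_congr (by rw [Nat.add_assoc, Nat.add_comm 1 t])⟩
  · exact ⟨wt s, fun t => net_off hnN h t⟩

/-- The cycle as a finset. -/
noncomputable def CF (N n : ℕ) : Finset (BState N) :=
  (Finset.range (2 ^ (n + 1))).image (cyc N n)

lemma mem_CF {N n : ℕ} {s : BState N} :
    s ∈ CF N n ↔ ∃ u, u < 2 ^ (n + 1) ∧ cyc N n u = s := by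
  simp [CF, Finset.mem_image, Finset.mem_range]

lemma card_CF {N n : ℕ} (hnN : n < N) : (CF N n).card = 2 ^ (n + 1) := by
  rw [CF, Finset.card_image_of_injOn, Finset.card_range]
  intro u hu v hv h
  exact cyc_inj hnN (Finset.mem_range.mp hu) (Finset.mem_range.mp hv) h

lemma attractor_eq {N n : ℕ} (hnN : n < N) (s : BState N) :
    attractor (net N n) s = ↑(CF N n) := by
  obtain ⟨u₀, hu₀⟩ := traj hnN s
  ext x
  constructor
  · intro hx
    obtain ⟨t, ht1, ht2⟩ := hx 1
    obtain ⟨t', rfl⟩ : ∃ t', t = t' + 1 := ⟨t - 1, by omega⟩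
    rw [hu₀ t'] at ht2
    subst ht2
    exact Finset.mem_coe.mpr (mem_CF.mpr
      ⟨(u₀ + t') % 2 ^ (n + 1), Nat.mod_lt _ (Lpos n), (cyc_mod N n _).symm⟩)
  · intro hx
    obtain ⟨v, hv, rfl⟩ := mem_CF.mp (Finset.mem_coe.mp hx)
    intro T
    set L := 2 ^ (n + 1) with hL
    have hLpos : 0 < L := Lpos n
    set d := (v + L - (u₀ + T) % L) % L with hd
    refine ⟨T + d + 1, by omega, ?_⟩
    rw [hu₀ (T + d)]
    apply cyc_congr
    show (u₀ + (T + d)) % L = v % L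
    have hr : (u₀ + T) % L < L := Nat.mod_lt _ hLpos
    have e1 : u₀ + (T + d) ≡ (u₀ + T) % L + d [MOD L] := by
      rw [← Nat.add_assoc]
      exact ((Nat.mod_modEq (u₀ + T) L).symm).add_right d
    have e2 : (u₀ + T) % L + d ≡ (u₀ + T) % L + (v + L - (u₀ + T) % L) [MOD L] :=
      (Nat.mod_modEq _ L).add_left _
    have e3 : (u₀ + T) % L + (v + L - (u₀ + T) % L) = v + L := by omega
    have e4 : v + L ≡ v [MOD L] := by
      show (v + L) % L = v % L
      exact Nat.add_mod_right v L
    have e5 := e1.trans e2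
    rw [e3] at e5
    exact e5.trans e4


lemma wt_adj {N : ℕ} {s s' : BState N} (h : hammingDist s s' = 1) :
    wt s' = wt s + 1 ∨ wt s = wt s' + 1 := by
  classical
  have h' : (Finset.univ.filter fun i : Fin N => s i ≠ s' i).card = 1 := h
  rw [Finset.card_eq_one] at h'
  obtain ⟨j₀, hj⟩ := h'
  have hdiff : s j₀ ≠ s' j₀ := by
    have : j₀ ∈ Finset.univ.filter fun i : Fin N => s i ≠ s' i := by
      rw [hj]; exact Finset.mem_singleton_self _
    exact (Finset.mem_filter.mp this).2
  have hsame : ∀ j, j ≠ j₀ → s j = s' j := by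
    intro j hne
    by_contra hcon
    have : j ∈ Finset.univ.filter fun i : Fin N => s i ≠ s' i :=
      Finset.mem_filter.mpr ⟨Finset.mem_univ _, hcon⟩
    rw [hj, Finset.mem_singleton] at this
    exact hne this
  have key : ∀ x : BState N, wt x =
      (if x j₀ = true then 1 else 0) + ((Finset.univ.erase j₀).filter fun j => x j = true).card := by
    intro x
    rw [wt]
    conv_lhs => rw [← Finset.insert_erase (Finset.mem_univ j₀)]
    rw [Finset.filter_insert]
    by_cases hx : x j₀ = true
    · rw [if_pos hx, if_pos hx, Finset.card_insert_of_notMem]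
      · exact Nat.add_comm _ 1
      · intro hmem
        exact (Finset.mem_erase.mp (Finset.filter_subset _ _ hmem)).1 rfl
    · rw [if_neg hx, if_neg hx, Nat.zero_add]
  have e2 : ((Finset.univ.erase j₀).filter fun j => s j = true) =
      ((Finset.univ.erase j₀).filter fun j => s' j = true) := by
    apply Finset.filter_congr
    intro j hjm
    rw [hsame j (Finset.mem_erase.mp hjm).1]
  rw [key s, key s', ← e2]
  cases hb : s j₀ <;> cases hb' : s' j₀ <;> simp_all <;> omega

/-- flip one coordinate -/
def flip (N : ℕ) : BState N × Fin N → BState N × BState N := fun p =>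
  (p.1, Function.update p.1 p.2 (!(p.1 p.2)))

lemma flip_inj (N : ℕ) : Function.Injective (flip N) := by
  rintro ⟨s, j⟩ ⟨s', j'⟩ h
  rw [flip, flip, Prod.mk.injEq] at h
  obtain ⟨h1, h2⟩ := h
  subst h1
  by_cases hjj : j = j'
  · rw [hjj]
  · exfalso
    have := congrFun h2 j
    rw [Function.update_self, Function.update_of_ne hjj] at this
    exact (Bool.not_ne_self (s j)) this

lemma flip_dist {N : ℕ} (p : BState N × Fin N) :
    hammingDist (flip N p).1 (flip N p).2 = 1 := by
  classical
  show (Finset.univ.filter fun i : Fin N =>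
    p.1 i ≠ Function.update p.1 p.2 (!(p.1 p.2)) i).card = 1
  have : (Finset.univ.filter fun i : Fin N =>
      p.1 i ≠ Function.update p.1 p.2 (!(p.1 p.2)) i) = {p.2} := by
    ext i
    simp only [Finset.mem_filter, Finset.mem_univ, true_and, Finset.mem_singleton]
    by_cases hi : i = p.2
    · subst hi
      rw [Function.update_self]
      simp
    · rw [Function.update_of_ne hi]
      simp [hi]
  rw [this, Finset.card_singleton]

lemma pairs_decomp {N : ℕ} (S : Finset (BState N)) :
    (Finset.univ.filter fun r : BState N × BState N =>
        hammingDist r.1 r.2 = 1 ∧ r.1 ∈ S) = (S ×ˢ Finset.univ).image (flip N) := by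
  classical
  ext r
  simp only [Finset.mem_filter, Finset.mem_univ, true_and, Finset.mem_image,
    Finset.mem_product]
  constructor
  · rintro ⟨hH, hS⟩
    have h' : (Finset.univ.filter fun i : Fin N => r.1 i ≠ r.2 i).card = 1 := hH
    rw [Finset.card_eq_one] at h'
    obtain ⟨j₀, hj⟩ := h'
    have hdiff : r.1 j₀ ≠ r.2 j₀ := by
      have : j₀ ∈ Finset.univ.filter fun i : Fin N => r.1 i ≠ r.2 i := by
        rw [hj]; exact Finset.mem_singleton_self _
      exact (Finset.mem_filter.mp this).2
    have hsame : ∀ j, j ≠ j₀ → r.1 j = r.2 j := by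
      intro j hne
      by_contra hcon
      have : j ∈ Finset.univ.filter fun i : Fin N => r.1 i ≠ r.2 i :=
        Finset.mem_filter.mpr ⟨Finset.mem_univ _, hcon⟩
      rw [hj, Finset.mem_singleton] at this
      exact hne this
    refine ⟨(r.1, j₀), ⟨hS, trivial⟩, ?_⟩
    have h2 : Function.update r.1 j₀ (!(r.1 j₀)) = r.2 := by
      funext j
      by_cases hjj : j = j₀
      · subst hjj
        rw [Function.update_self]
        cases hb : r.1 j <;> cases hb' : r.2 j <;> simp_all
      · rw [Function.update_of_ne hjj]
        exact hsame j hjj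
    show (r.1, Function.update r.1 j₀ (!(r.1 j₀))) = r
    rw [h2]
  · rintro ⟨⟨s, j⟩, ⟨hS, -⟩, rfl⟩
    exact ⟨flip_dist _, hS⟩

lemma pairs_card {N : ℕ} (S : Finset (BState N)) :
    (Finset.univ.filter fun r : BState N × BState N =>
        hammingDist r.1 r.2 = 1 ∧ r.1 ∈ S).card = S.card * N := by
  rw [pairs_decomp, Finset.card_image_of_injective _ (flip_inj N), Finset.card_product]
  simp

lemma pairs_card2 {N : ℕ} (S : Finset (BState N)) :
    (Finset.univ.filter fun r : BState N × BState N =>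
        hammingDist r.1 r.2 = 1 ∧ r.2 ∈ S).card = S.card * N := by
  classical
  have hswap : (Finset.univ.filter fun r : BState N × BState N =>
      hammingDist r.1 r.2 = 1 ∧ r.2 ∈ S) =
      (Finset.univ.filter fun r : BState N × BState N =>
        hammingDist r.1 r.2 = 1 ∧ r.1 ∈ S).image Prod.swap := by
    ext r
    simp only [Finset.mem_image, Finset.mem_filter, Finset.mem_univ, true_and]
    constructor
    · rintro ⟨hH, hS⟩
      exact ⟨(r.2, r.1), ⟨(hammingDist_comm r.1 r.2) ▸ hH, hS⟩, rfl⟩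
    · rintro ⟨a, ⟨hH, hS⟩, rfl⟩
      exact ⟨(hammingDist_comm a.1 a.2) ▸ hH, hS⟩
  rw [hswap, Finset.card_image_of_injective _ Prod.swap_injective, pairs_card]

lemma pairs_card_all (N : ℕ) :
    (Finset.univ.filter fun r : BState N × BState N =>
        hammingDist r.1 r.2 = 1).card = 2 ^ N * N := by
  classical
  have := pairs_card (Finset.univ : Finset (BState N))
  simp only [Finset.mem_univ, and_true] at this
  rw [this]
  congr 1
  rw [Finset.card_univ]
  simp [Fintype.card_fun]


lemma chaotic {N n : ℕ} (hnN : n < N) {p c : ℝ} (hp : p < 1)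
    (hc : (c : ℝ) ^ N < 2 ^ (n + 1)) : pcChaotic (net N n) p c := by
  unfold pcChaotic
  have hset : {s : BState N | (c : ℝ) ^ N < (((attractor (net N n) s).ncard : ℕ) : ℝ)} =
      Set.univ := by
    ext s
    simp only [Set.mem_setOf_eq, Set.mem_univ, iff_true]
    rw [attractor_eq hnN s, Set.ncard_coe_finset, card_CF hnN]
    push_cast
    exact hc
  rw [hset, Set.ncard_univ]
  have hcard : Nat.card (BState N) = 2 ^ N := by
    rw [Nat.card_eq_fintype_card]
    simp [Fintype.card_fun]
  rw [hcard]
  push_cast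
  have h2 : (0:ℝ) < 2 ^ N := by positivity
  nlinarith

lemma decoherent {N n : ℕ} (hn1 : 1 ≤ n) (hnN : n < N) {p α q : ℝ}
    (hq0 : 0 < q) (hq1 : q < 1)
    (hα : α * N ≤ (N : ℝ) - 1)
    (hcount : p * ((N : ℝ) * 2 ^ N) ≤ (2 : ℝ) ^ N * N - 2 * ((2 : ℝ) ^ (n + 1) * N)) :
    pAlphaQDecoherent (net N n) p α q := by
  classical
  unfold pAlphaQDecoherent
  set GoodF := Finset.univ.filter (fun r : BState N × BState N =>
    hammingDist r.1 r.2 = 1 ∧ ¬ (r.1 ∈ CF N n ∨ r.2 ∈ CF N n)) with hGoodF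
  have good_card : (2 ^ N * N : ℕ) ≤ GoodF.card + (2 ^ (n + 1) * N + 2 ^ (n + 1) * N) := by
    have hsub : (Finset.univ.filter fun r : BState N × BState N =>
        hammingDist r.1 r.2 = 1) ⊆ GoodF ∪
          ((Finset.univ.filter fun r : BState N × BState N =>
            hammingDist r.1 r.2 = 1 ∧ r.1 ∈ CF N n) ∪
          (Finset.univ.filter fun r : BState N × BState N =>
            hammingDist r.1 r.2 = 1 ∧ r.2 ∈ CF N n)) := by
      intro r hr
      rw [Finset.mem_filter] at hr
      simp only [Finset.mem_union, hGoodF, Finset.mem_filter, Finset.mem_univ, true_and]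
      tauto
    have hle := Finset.card_le_card hsub
    have hun := le_trans hle (le_trans (Finset.card_union_le _ _)
      (Nat.add_le_add_left (Finset.card_union_le _ _) _))
    rw [pairs_card_all, pairs_card, pairs_card2, card_CF hnN] at hun
    omega
  have hGsub : (↑GoodF : Set (BState N × BState N)) ⊆
      {r ∈ PerturbPairs N |
        ∃ T₀ : ℕ, ∀ tstar : ℕ, T₀ ≤ tstar →
          q * ((tstar : ℝ) + 1) ≤
            (({t : ℕ | t ≤ tstar ∧
                α * N ≤ (hammingDist ((net N n)^[t] r.1) ((net N n)^[t] r.2) : ℝ)}).ncard : ℝ)} := by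
    intro r hr
    rw [Finset.mem_coe, hGoodF, Finset.mem_filter] at hr
    obtain ⟨-, hH, hnot⟩ := hr
    push_neg at hnot
    obtain ⟨hr1, hr2⟩ := hnot
    have hdist : ∀ t, 1 ≤ t →
        α * N ≤ ((hammingDist ((net N n)^[t] r.1) ((net N n)^[t] r.2) : ℕ) : ℝ) := by
      intro t ht
      obtain ⟨t', rfl⟩ : ∃ t', t = t' + 1 := ⟨t - 1, by omega⟩
      have h1 : ¬ ∃ u, u < 2 ^ (n + 1) ∧ cyc N n u = r.1 := fun hcc => hr1 (mem_CF.mpr hcc)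
      have h2 : ¬ ∃ u, u < 2 ^ (n + 1) ∧ cyc N n u = r.2 := fun hcc => hr2 (mem_CF.mpr hcc)
      rw [net_off hnN h1, net_off hnN h2]
      have hN1 : 1 ≤ N := by omega
      rcases wt_adj hH with hw | hw
      · have hadj := cyc_adj hn1 hnN (wt r.1 + t')
        have e : wt r.2 + t' = (wt r.1 + t') + 1 := by omega
        rw [e]
        calc α * N ≤ (N : ℝ) - 1 := hα
          _ = ((N - 1 : ℕ) : ℝ) := by rw [Nat.cast_sub hN1]; norm_num
          _ ≤ _ := Nat.cast_le.mpr hadj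
      · have hadj := cyc_adj hn1 hnN (wt r.2 + t')
        have e : wt r.1 + t' = (wt r.2 + t') + 1 := by omega
        rw [e, hammingDist_comm]
        calc α * N ≤ (N : ℝ) - 1 := hα
          _ = ((N - 1 : ℕ) : ℝ) := by rw [Nat.cast_sub hN1]; norm_num
          _ ≤ _ := Nat.cast_le.mpr hadj
    refine ⟨hH, ⟨⌈q / (1 - q)⌉₊, fun tstar htstar => ?_⟩⟩
    have hsubt : Set.Icc 1 tstar ⊆ {t : ℕ | t ≤ tstar ∧
        α * N ≤ (hammingDist ((net N n)^[t] r.1) ((net N n)^[t] r.2) : ℝ)} :=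
      fun t ht => ⟨ht.2, hdist t ht.1⟩
    have hfin : {t : ℕ | t ≤ tstar ∧
        α * N ≤ (hammingDist ((net N n)^[t] r.1) ((net N n)^[t] r.2) : ℝ)}.Finite :=
      (Set.finite_Iic tstar).subset fun t ht => ht.1
    have hge : tstar ≤ {t : ℕ | t ≤ tstar ∧
        α * N ≤ (hammingDist ((net N n)^[t] r.1) ((net N n)^[t] r.2) : ℝ)}.ncard := by
      calc tstar = (Set.Icc 1 tstar).ncard := by
            rw [← Finset.coe_Icc, Set.ncard_coe_finset, Nat.card_Icc]
            omega
          _ ≤ _ := Set.ncard_le_ncard hsubt hfin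
    have h1q : (0:ℝ) < 1 - q := by linarith
    have hq' : q / (1 - q) ≤ (tstar : ℝ) :=
      le_trans (Nat.le_ceil _) (Nat.cast_le.mpr htstar)
    rw [div_le_iff₀ h1q] at hq'
    have hstep : q * ((tstar : ℝ) + 1) ≤ (tstar : ℝ) := by nlinarith
    exact le_trans hstep (by exact_mod_cast hge)
  calc p * ((N : ℝ) * 2 ^ N)
      ≤ (2 : ℝ) ^ N * N - 2 * ((2 : ℝ) ^ (n + 1) * N) := hcount
    _ ≤ (GoodF.card : ℝ) := by
        have := good_card
        have hcast : ((2 ^ N * N : ℕ) : ℝ) ≤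
            ((GoodF.card + (2 ^ (n + 1) * N + 2 ^ (n + 1) * N) : ℕ) : ℝ) := Nat.cast_le.mpr this
        push_cast at hcast
        linarith
    _ = ((↑GoodF : Set (BState N × BState N)).ncard : ℝ) := by
        rw [Set.ncard_coe_finset]
    _ ≤ _ := Nat.cast_le.mpr (Set.ncard_le_ncard hGsub (Set.toFinite _))


end P35


/-- Proposition 3.5: for `0 < α, p, q < 1` and `1 < c < 2`, all sufficiently large `N`
admit a (not necessarily cooperative) `p`-`c`-chaotic, `p`-`α`-`q`-decoherent network. -/
theorem chaotic_alpha_q_decoherent_exists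
    (α p q : ℝ) (hα0 : 0 < α) (hα1 : α < 1) (hp0 : 0 < p) (hp1 : p < 1)
    (hq0 : 0 < q) (hq1 : q < 1) (c : ℝ) (hc1 : 1 < c) (hc2 : c < 2) :
    ∃ N₀ : ℕ, ∀ N : ℕ, N₀ ≤ N →
      ∃ f : BState N → BState N,
        pcChaotic f p c ∧ pAlphaQDecoherent f p α q := by
  have hp1' : (0:ℝ) < 1 - p := by linarith
  obtain ⟨k', hk'⟩ := pow_unbounded_of_one_lt ((2:ℝ) / (1 - p)) (by norm_num : (1:ℝ) < 2)
  have hk2 : (2:ℝ) ≤ (1 - p) * 2 ^ k' := by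
    rw [div_lt_iff₀ hp1'] at hk'
    nlinarith
  have htend : Filter.Tendsto (fun N : ℕ => (c / 2) ^ N) Filter.atTop (nhds 0) :=
    tendsto_pow_atTop_nhds_zero_of_lt_one (by linarith) (by linarith)
  have hepos : (0:ℝ) < 1 / 2 ^ k' := by positivity
  obtain ⟨N₁, hN₁⟩ := Filter.eventually_atTop.mp (htend.eventually_lt_const hepos)
  refine ⟨max (max N₁ (⌈(1:ℝ) / (1 - α)⌉₊ + 1)) (k' + 2), fun N hN => ?_⟩
  set n := N - k' - 1 with hn
  have hk'N : k' + 2 ≤ N := le_trans (le_max_right _ _) hN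
  have hn1 : 1 ≤ n := by omega
  have hnN : n < N := by omega
  have hnk : n + 1 = N - k' := by omega
  have h2N : (0:ℝ) < 2 ^ N := by positivity
  have hid : (2:ℝ) ^ N = 2 ^ (n + 1) * 2 ^ k' := by
    rw [← pow_add]
    congr 1
    omega
  have hc : (c : ℝ) ^ N < 2 ^ (n + 1) := by
    have hcp : (c / 2) ^ N < 1 / 2 ^ k' :=
      hN₁ N (le_trans (le_trans (le_max_left _ _) (le_max_left _ _)) hN)
    have he : (c : ℝ) ^ N = (c / 2) ^ N * 2 ^ N := by
      rw [div_pow]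
      field_simp
    rw [he]
    calc (c / 2) ^ N * 2 ^ N < (1 / 2 ^ k') * 2 ^ N :=
          mul_lt_mul_of_pos_right hcp h2N
      _ = 2 ^ (n + 1) := by
          rw [hid]
          field_simp
  have hα : α * N ≤ (N : ℝ) - 1 := by
    have hα1' : (0:ℝ) < 1 - α := by linarith
    have hNα : (⌈(1:ℝ) / (1 - α)⌉₊ + 1 : ℕ) ≤ N :=
      le_trans (le_trans (le_max_right _ _) (le_max_left _ _)) hN
    have h1 : (1:ℝ) / (1 - α) ≤ (N : ℝ) := by
      calc (1:ℝ) / (1 - α) ≤ (⌈(1:ℝ) / (1 - α)⌉₊ : ℝ) := Nat.le_ceil _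
        _ ≤ (N : ℝ) := by exact_mod_cast le_trans (Nat.le_succ _) hNα
    rw [div_le_iff₀ hα1'] at h1
    nlinarith
  have hcount : p * ((N : ℝ) * 2 ^ N) ≤ (2 : ℝ) ^ N * N - 2 * ((2 : ℝ) ^ (n + 1) * N) := by
    have hpos : (0:ℝ) < 2 ^ (n + 1) := by positivity
    have h1 : 2 * (2:ℝ) ^ (n + 1) ≤ (1 - p) * 2 ^ N := by
      rw [hid]
      calc 2 * (2:ℝ) ^ (n + 1) = 2 ^ (n + 1) * 2 := by ring
        _ ≤ 2 ^ (n + 1) * ((1 - p) * 2 ^ k') := by nlinarith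
        _ = (1 - p) * (2 ^ (n + 1) * 2 ^ k') := by ring
    have h2 := mul_le_mul_of_nonneg_right h1 (Nat.cast_nonneg N : (0:ℝ) ≤ N)
    nlinarith
  exact ⟨P35.net N n, P35.chaotic hnN hp1 hc, P35.decoherent hn1 hnN hq0 hq1 hα hcount⟩
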